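/- arXiv:2301.03683 — 2 statements merged into one kernel-verified Lean document; each statement's English description precedes it below -/
import Mathlib

section
/- Let (g,γ) be a construction pair on an abelian group (X,+), and equip ℤ × X with the multiplication (i,x)·(j,y) = (i+j, g^{−j}(x)+y+∑_{k∈I(i+j,−j)} g^{−k}(γ(x,y))). Then (0,0) is a two-sided identity element; every element u = (i,x) has the two-sided inverse u⁻¹ = (−i, −g^i(x)), i.e. u·u⁻¹ = (0,0) = u⁻¹·u; and the inverse properties u⁻¹·(u·w) = w and (w·u)·u⁻¹ = w hold for all u,w ∈ ℤ × X. -/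
/-- The interval `I(i,j)` of integers: `∅` if `i = j`, `{i,…,j-1}` if `i < j`,
and `{j,…,i-1}` if `j < i`. -/
noncomputable def I (i j : ℤ) : Finset ℤ := Finset.Ico (min i j) (max i j)

/-- A construction pair `(g, γ)` on an abelian group `(X, +)`. -/
structure IsConstructionPair {X : Type*} [AddCommGroup X]
    (g : Equiv.Perm X) (γ : X → X → X) : Prop where
  symm : ∀ x y, γ x y = γ y x
  alt : ∀ x, γ x x = 0
  add_left : ∀ x y z, γ (x + y) z = γ x z + γ y z
  add_right : ∀ x y z, γ x (y + z) = γ x y + γ x z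
  c1 : ∀ x y, g⁻¹ (g x + g y)
      = x + y + γ x y + g⁻¹ (γ x y) + g⁻¹ (g⁻¹ (γ x y))
  c2 : ∀ x y z, γ (γ x y) z = 0
  c3 : ∀ x y, g⁻¹ (γ x y) = γ (g x) y

set_option linter.unusedSectionVars false
theorem Equiv.Perm.apply_inv_self {α : Type*} (f : Equiv.Perm α) (x : α) : f (f⁻¹ x) = x :=
  Equiv.apply_symm_apply f x
theorem Equiv.Perm.inv_apply_self {α : Type*} (f : Equiv.Perm α) (x : α) : f⁻¹ (f x) = x :=
  Equiv.symm_apply_apply f x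
namespace CP
variable {X : Type*} [AddCommGroup X] {g : Equiv.Perm X} {γ : X → X → X}

lemma gg (m n : ℤ) (x : X) : (g ^ m) ((g ^ n) x) = (g ^ (m + n)) x := by
  rw [zpow_add]; rfl

lemma gpow_succ_apply (n : ℤ) (x : X) : (g ^ (n + 1)) x = g ((g ^ n) x) := by
  rw [show n + 1 = 1 + n by ring, zpow_add, zpow_one]; rfl

lemma gpow_pred_apply (n : ℤ) (x : X) : (g ^ (n - 1)) x = g⁻¹ ((g ^ n) x) := by
  rw [show n - 1 = -1 + n by ring, zpow_add, zpow_neg_one]; rfl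

lemma gz (h : IsConstructionPair g γ) (z : X) : γ 0 z = 0 := by
  have h1 := h.add_left 0 0 z
  rw [add_zero] at h1
  exact (left_eq_add.mp h1)

lemma zg (h : IsConstructionPair g γ) (z : X) : γ z 0 = 0 := by
  rw [h.symm]; exact gz h z

lemma gneg_right (h : IsConstructionPair g γ) (x y : X) : γ x (-y) = -γ x y := by
  have h1 := h.add_right x y (-y)
  rw [add_neg_cancel, zg h] at h1
  exact (neg_eq_of_add_eq_zero_right h1.symm).symm

lemma gneg_left (h : IsConstructionPair g γ) (x y : X) : γ (-x) y = -γ x y := by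
  rw [h.symm, gneg_right h, h.symm]

lemma tt (h : IsConstructionPair g γ) (x y : X) : γ x y + γ x y = 0 := by
  have h1 := h.alt (x + y)
  rw [h.add_left, h.add_right, h.add_right, h.alt, h.alt, h.symm y x] at h1
  rw [zero_add, add_zero] at h1
  exact h1

lemma neg_gam (h : IsConstructionPair g γ) (x y : X) : -γ x y = γ x y :=
  neg_eq_of_add_eq_zero_left (tt h x y)

lemma ginv_zero (h : IsConstructionPair g γ) : g⁻¹ (0 : X) = 0 := by
  have h1 := h.c3 0 0
  rw [gz h, zg h] at h1
  exact h1

lemma g_zero (h : IsConstructionPair g γ) : g (0 : X) = 0 := by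
  calc g (0 : X) = g (g⁻¹ 0) := by rw [ginv_zero h]
  _ = 0 := Equiv.Perm.apply_inv_self g 0

lemma g_neg (h : IsConstructionPair g γ) (x : X) : g (-x) = -g x := by
  have h1 := h.c1 x (-x)
  rw [gneg_right h, h.alt, neg_zero, ginv_zero h, ginv_zero h] at h1
  rw [add_neg_cancel, zero_add, add_zero, add_zero] at h1
  have h2 : g x + g (-x) = 0 := by
    calc g x + g (-x) = g (g⁻¹ (g x + g (-x))) := (Equiv.Perm.apply_inv_self g _).symm
    _ = g 0 := by rw [h1]
    _ = 0 := g_zero h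
  exact eq_neg_of_add_eq_zero_right h2

lemma ginv_neg (h : IsConstructionPair g γ) (x : X) : g⁻¹ (-x) = -g⁻¹ x := by
  apply g.injective
  rw [Equiv.Perm.apply_inv_self, g_neg h, Equiv.Perm.apply_inv_self]

lemma zpow_apply_zero (h : IsConstructionPair g γ) (n : ℤ) : (g ^ n) (0 : X) = 0 := by
  induction n using Int.induction_on with
  | zero => simp
  | succ k ih => rw [gpow_succ_apply, ih, g_zero h]
  | pred k ih => rw [show (-(k:ℤ) - 1) = -(k:ℤ) - 1 by ring, gpow_pred_apply, ih, ginv_zero h]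

lemma zpow_neg_apply (h : IsConstructionPair g γ) (n : ℤ) (x : X) :
    (g ^ n) (-x) = -((g ^ n) x) := by
  induction n using Int.induction_on with
  | zero => simp
  | succ k ih => rw [gpow_succ_apply, gpow_succ_apply, ih, g_neg h]
  | pred k ih => rw [gpow_pred_apply, gpow_pred_apply, ih, ginv_neg h]

lemma c3l (h : IsConstructionPair g γ) (x y : X) : γ (g x) y = g⁻¹ (γ x y) :=
  (h.c3 x y).symm

lemma c3l' (h : IsConstructionPair g γ) (x y : X) : γ (g⁻¹ x) y = g (γ x y) := by
  have h1 := h.c3 (g⁻¹ x) y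
  rw [Equiv.Perm.apply_inv_self] at h1
  calc γ (g⁻¹ x) y = g (g⁻¹ (γ (g⁻¹ x) y)) := (Equiv.Perm.apply_inv_self g _).symm
  _ = g (γ x y) := by rw [h1]

lemma c3r' (h : IsConstructionPair g γ) (x y : X) : γ x (g⁻¹ y) = g (γ x y) := by
  rw [h.symm, c3l' h, h.symm]

lemma cpow_left (h : IsConstructionPair g γ) (n : ℤ) (x y : X) :
    γ ((g ^ n) x) y = (g ^ (-n)) (γ x y) := by
  induction n using Int.induction_on with
  | zero => simp
  | succ k ih =>
      rw [gpow_succ_apply, c3l h, ih, ← gpow_pred_apply,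
        show (-(k:ℤ) - 1) = -((k:ℤ) + 1) by ring]
  | pred k ih =>
      rw [gpow_pred_apply, c3l' h, ih, ← gpow_succ_apply,
        show (- -(k:ℤ) + 1) = -(-(k:ℤ) - 1) by ring]

lemma cpow_right (h : IsConstructionPair g γ) (n : ℤ) (x y : X) :
    γ x ((g ^ n) y) = (g ^ (-n)) (γ x y) := by
  rw [h.symm, cpow_left h, h.symm]

lemma phi_eq (h : IsConstructionPair g γ) (k : ℤ) (x y : X) :
    (g ^ k) (γ x y) = γ ((g ^ (-k)) x) y := by
  rw [cpow_left h, neg_neg]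

lemma phi_tt (h : IsConstructionPair g γ) (k : ℤ) (x y : X) :
    (g ^ k) (γ x y) + (g ^ k) (γ x y) = 0 := by
  rw [phi_eq h]; exact tt h _ _

lemma phi_neg (h : IsConstructionPair g γ) (k : ℤ) (x y : X) :
    -((g ^ k) (γ x y)) = (g ^ k) (γ x y) := by
  rw [phi_eq h]; exact neg_gam h _ _

end CP

namespace CP
variable {X : Type*} [AddCommGroup X] {g : Equiv.Perm X} {γ : X → X → X}

def IsC (γ : X → X → X) (c : X) : Prop := ∀ z, γ c z = 0

lemma isc_gam (h : IsConstructionPair g γ) (x y : X) : IsC γ (γ x y) :=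
  fun z => h.c2 x y z

lemma gam_isc_right (h : IsConstructionPair g γ) {c : X} (hc : IsC γ c) (z : X) :
    γ z c = 0 := by rw [h.symm]; exact hc z

lemma isc_inv (h : IsConstructionPair g γ) {c : X} (hc : IsC γ c) : IsC γ (g⁻¹ c) :=
  fun z => by rw [c3l' h, hc z, g_zero h]

lemma isc_pow (h : IsConstructionPair g γ) {c : X} (hc : IsC γ c) (n : ℤ) :
    IsC γ ((g ^ n) c) :=
  fun z => by rw [cpow_left h, hc z, zpow_apply_zero h]

lemma isc_add (h : IsConstructionPair g γ) {c d : X} (hc : IsC γ c) (hd : IsC γ d) :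
    IsC γ (c + d) :=
  fun z => by rw [h.add_left, hc z, hd z, add_zero]

lemma isc_zero (h : IsConstructionPair g γ) : IsC γ (0 : X) := fun z => gz h z

lemma isc_sum (h : IsConstructionPair g γ) (s : Finset ℤ) (f : ℤ → X)
    (hf : ∀ k ∈ s, IsC γ (f k)) : IsC γ (∑ k ∈ s, f k) := by
  induction s using Finset.cons_induction with
  | empty => simpa using isc_zero h
  | cons a s ha ih =>
      rw [Finset.sum_cons]
      exact isc_add h (hf a (Finset.mem_cons_self a s))
        (ih (fun k hk => hf k (Finset.mem_cons_of_mem hk)))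

lemma g_add_isc (h : IsConstructionPair g γ) (a : X) {t : X} (ht : IsC γ t) :
    g (a + t) = g a + g t := by
  have hat : γ a t = 0 := gam_isc_right h ht a
  have h1 := h.c1 a t
  rw [hat, ginv_zero h, ginv_zero h, add_zero, add_zero, add_zero] at h1
  calc g (a + t) = g (g⁻¹ (g a + g t)) := by rw [h1]
  _ = g a + g t := Equiv.Perm.apply_inv_self g _

lemma ginv_add_isc (h : IsConstructionPair g γ) (a : X) {t : X} (ht : IsC γ t) :
    g⁻¹ (a + t) = g⁻¹ a + g⁻¹ t := by
  apply g.injective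
  rw [Equiv.Perm.apply_inv_self, g_add_isc h _ (isc_inv h ht),
    Equiv.Perm.apply_inv_self, Equiv.Perm.apply_inv_self]

lemma gpow_add_isc (h : IsConstructionPair g γ) (n : ℤ) (a : X) {t : X} (ht : IsC γ t) :
    (g ^ n) (a + t) = (g ^ n) a + (g ^ n) t := by
  induction n using Int.induction_on with
  | zero => simp
  | succ k ih =>
      rw [gpow_succ_apply, ih, gpow_succ_apply, gpow_succ_apply,
        g_add_isc h _ (isc_pow h ht _)]
  | pred k ih =>
      rw [gpow_pred_apply, ih, gpow_pred_apply, gpow_pred_apply,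
        ginv_add_isc h _ (isc_pow h ht _)]

lemma gpow_sum (h : IsConstructionPair g γ) (n : ℤ) (s : Finset ℤ) (f : ℤ → ℤ) (x y : X) :
    (g ^ n) (∑ k ∈ s, (g ^ f k) (γ x y)) = ∑ k ∈ s, (g ^ (f k + n)) (γ x y) := by
  induction s using Finset.cons_induction with
  | empty => simpa using zpow_apply_zero h n
  | cons a s ha ih =>
      rw [Finset.sum_cons, Finset.sum_cons,
        gpow_add_isc h n _ (isc_sum h s _ (fun k _ => isc_pow h (isc_gam h x y) _)),
        ih, gg, add_comm n (f a)]

lemma sum_tt (h : IsConstructionPair g γ) (s : Finset ℤ) (f : ℤ → ℤ) (x y : X) :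
    (∑ k ∈ s, (g ^ f k) (γ x y)) + (∑ k ∈ s, (g ^ f k) (γ x y)) = 0 := by
  rw [← Finset.sum_add_distrib]
  exact Finset.sum_eq_zero fun k _ => phi_tt h (f k) x y

end CP

namespace CP
variable {X : Type*} [AddCommGroup X] {g : Equiv.Perm X} {γ : X → X → X}

lemma I_comm (a b : ℤ) : I a b = I b a := by
  unfold I; rw [min_comm, max_comm]

lemma I_of_le {a b : ℤ} (hab : a ≤ b) : I a b = Finset.Ico a b := by
  unfold I; rw [min_eq_left hab, max_eq_right hab]

lemma mem_I {k a b : ℤ} : k ∈ I a b ↔ min a b ≤ k ∧ k < max a b := by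
  unfold I; exact Finset.mem_Ico

lemma sum_pow_reindex (c₀ : X) (p q s : ℤ) :
    ∑ k ∈ I p q, (g ^ (s - k)) c₀ = ∑ k ∈ I (s + 1 - p) (s + 1 - q), (g ^ k) c₀ := by
  apply Finset.sum_nbij' (i := fun k => s - k) (j := fun k => s - k)
  · intro a ha; simp only [mem_I] at *; omega
  · intro a ha; simp only [mem_I] at *; omega
  · intro a _; omega
  · intro a _; omega
  · intro a _; rfl

lemma sum_pow_shift (c₀ : X) (p q s : ℤ) :
    ∑ k ∈ I p q, (g ^ (k + s)) c₀ = ∑ k ∈ I (p + s) (q + s), (g ^ k) c₀ := by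
  apply Finset.sum_nbij' (i := fun k => k + s) (j := fun k => k - s)
  · intro a ha; simp only [mem_I] at *; omega
  · intro a ha; simp only [mem_I] at *; omega
  · intro a _; omega
  · intro a _; omega
  · intro a _; rfl

lemma sum_pow_shift_Ico (c₀ : X) (p q s : ℤ) :
    ∑ k ∈ Finset.Ico p q, (g ^ (k + s)) c₀ = ∑ k ∈ Finset.Ico (p + s) (q + s), (g ^ k) c₀ := by
  apply Finset.sum_nbij' (i := fun k => k + s) (j := fun k => k - s)
  · intro a ha; simp only [Finset.mem_Ico] at *; omega
  · intro a ha; simp only [Finset.mem_Ico] at *; omega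
  · intro a _; omega
  · intro a _; omega
  · intro a _; rfl

lemma sum_I_union (F : ℤ → X) {p q r : ℤ} (hpq : p ≤ q) (hqr : q ≤ r) :
    (∑ k ∈ I p q, F k) + (∑ k ∈ I q r, F k) = ∑ k ∈ I p r, F k := by
  rw [I_of_le hpq, I_of_le hqr, I_of_le (hpq.trans hqr),
    ← Finset.Ico_union_Ico_eq_Ico hpq hqr]
  exact (Finset.sum_union (Finset.Ico_disjoint_Ico_consecutive p q r)).symm

lemma self2 (F : ℤ → X) (hF : ∀ m, F m + F m = 0) (s : Finset ℤ) :
    (∑ k ∈ s, F k) + (∑ k ∈ s, F k) = 0 := by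
  rw [← Finset.sum_add_distrib]
  exact Finset.sum_eq_zero fun k _ => hF k

lemma tri_sorted (F : ℤ → X) (hF : ∀ m, F m + F m = 0) {p q r : ℤ}
    (hpq : p ≤ q) (hqr : q ≤ r) :
    (∑ k ∈ I p r, F k) + (∑ k ∈ I q r, F k) + (∑ k ∈ I q p, F k) = 0 := by
  rw [I_comm q p, ← sum_I_union F hpq hqr]
  have e : ∀ A B : X, A + B + B + A = (A + A) + (B + B) := by intros; abel
  rw [e, self2 F hF, self2 F hF, add_zero]

lemma tri (F : ℤ → X) (hF : ∀ m, F m + F m = 0) (a b c : ℤ) :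
    (∑ k ∈ I a c, F k) + (∑ k ∈ I b c, F k) + (∑ k ∈ I b a, F k) = 0 := by
  rcases le_total a b with hab | hab <;> rcases le_total b c with hbc | hbc <;>
    rcases le_total a c with hac | hac
  · exact tri_sorted F hF hab hbc
  · exact tri_sorted F hF hab hbc
  · have key := tri_sorted F hF hac hbc
    rw [I_comm a c, I_comm b c, I_comm b a, ← key]; abel
  · have key := tri_sorted F hF hac hab
    rw [I_comm b c, I_comm b a, ← key]; abel
  · have key := tri_sorted F hF hab hac
    rw [I_comm b a, ← key]; abel
  · have key := tri_sorted F hF hbc hac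
    rw [I_comm a c, I_comm b c, ← key]; abel
  · have key := tri_sorted F hF hbc hab
    rw [I_comm a c, ← key]; abel
  · have key := tri_sorted F hF hbc hab
    rw [I_comm a c, ← key]; abel

lemma Ico3 (m : ℤ) (F : ℤ → X) :
    ∑ k ∈ Finset.Ico m (m + 3), F k = F m + F (m + 1) + F (m + 1 + 1) := by
  have hs : Finset.Ico m (m + 3) = {m, m + 1, m + 1 + 1} := by
    ext k
    simp only [Finset.mem_Ico, Finset.mem_insert, Finset.mem_singleton]
    omega
  rw [hs, Finset.sum_insert (by simp only [Finset.mem_insert, Finset.mem_singleton]; omega), Finset.sum_insert (by simp only [Finset.mem_singleton]; omega),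
    Finset.sum_singleton]
  abel

end CP

namespace CP
variable {X : Type*} [AddCommGroup X] {g : Equiv.Perm X} {γ : X → X → X}

lemma sum_Ico_union (F : ℤ → X) {p q r : ℤ} (hpq : p ≤ q) (hqr : q ≤ r) :
    (∑ k ∈ Finset.Ico p q, F k) + (∑ k ∈ Finset.Ico q r, F k) = ∑ k ∈ Finset.Ico p r, F k := by
  rw [← Finset.Ico_union_Ico_eq_Ico hpq hqr]
  exact (Finset.sum_union (Finset.Ico_disjoint_Ico_consecutive p q r)).symm

lemma g_sum (h : IsConstructionPair g γ) (s : Finset ℤ) (f : ℤ → ℤ) (x y : X) :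
    g (∑ k ∈ s, (g ^ f k) (γ x y)) = ∑ k ∈ s, (g ^ (f k + 1)) (γ x y) := by
  have e : g (∑ k ∈ s, (g ^ f k) (γ x y)) = (g ^ (1 : ℤ)) (∑ k ∈ s, (g ^ f k) (γ x y)) := by
    rw [zpow_one]
  rw [e, gpow_sum h 1 s f x y]

lemma ginv_sum (h : IsConstructionPair g γ) (s : Finset ℤ) (f : ℤ → ℤ) (x y : X) :
    g⁻¹ (∑ k ∈ s, (g ^ f k) (γ x y)) = ∑ k ∈ s, (g ^ (f k + -1)) (γ x y) := by
  have e : g⁻¹ (∑ k ∈ s, (g ^ f k) (γ x y))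
      = (g ^ (-1 : ℤ)) (∑ k ∈ s, (g ^ f k) (γ x y)) := by rw [zpow_neg_one]
  rw [e, gpow_sum h (-1) s f x y]

lemma Dneg1 (h : IsConstructionPair g γ) (u v : X) :
    g⁻¹ (u + v) = g⁻¹ u + g⁻¹ v + g (g (γ u v)) + g (γ u v) + γ u v := by
  have hd : γ (g⁻¹ u) (g⁻¹ v) = g (g (γ u v)) := by rw [c3l' h, c3r' h]
  have h1 := h.c1 (g⁻¹ u) (g⁻¹ v)
  rw [Equiv.Perm.apply_inv_self, Equiv.Perm.apply_inv_self, hd] at h1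
  simp only [Equiv.Perm.inv_apply_self] at h1
  exact h1

lemma Dpos1 (h : IsConstructionPair g γ) (u v : X) :
    g (u + v) = g u + g v + (g (γ u v) + γ u v + g⁻¹ (γ u v)) := by
  have h1 := h.c1 u v
  have h2 : g u + g v = g (u + v + γ u v + g⁻¹ (γ u v) + g⁻¹ (g⁻¹ (γ u v))) := by
    rw [← h1, Equiv.Perm.apply_inv_self]
  rw [g_add_isc h _ (isc_inv h (isc_inv h (isc_gam h u v))),
    g_add_isc h _ (isc_inv h (isc_gam h u v)),
    g_add_isc h _ (isc_gam h u v), Equiv.Perm.apply_inv_self,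
    Equiv.Perm.apply_inv_self] at h2
  rw [h2]
  have t1 : g (γ u v) + g (γ u v) = 0 := by
    rw [show g (γ u v) = γ (g⁻¹ u) v from (c3l' h u v).symm]; exact tt h _ _
  have t2 : γ u v + γ u v = 0 := tt h u v
  have t3 : g⁻¹ (γ u v) + g⁻¹ (γ u v) = 0 := by
    rw [h.c3]; exact tt h _ _
  have e : g (u + v) + g (γ u v) + γ u v + g⁻¹ (γ u v) + (g (γ u v) + γ u v + g⁻¹ (γ u v))
      = g (u + v) + ((g (γ u v) + g (γ u v)) + ((γ u v + γ u v)
        + (g⁻¹ (γ u v) + g⁻¹ (γ u v)))) := by abel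
  rw [e, t1, t2, t3]
  simp

lemma Dneg (h : IsConstructionPair g γ) (a b : X) (n : ℕ) :
    (g ^ (-(n : ℤ))) (a + b) = (g ^ (-(n : ℤ))) a + (g ^ (-(n : ℤ))) b
      + ∑ k ∈ Finset.Ico (1 - (n : ℤ)) (2 * (n : ℤ) + 1), (g ^ k) (γ a b) := by
  induction n with
  | zero => simp
  | succ n ih =>
      have hS : IsC γ (∑ k ∈ Finset.Ico (1 - (n : ℤ)) (2 * (n : ℤ) + 1), (g ^ k) (γ a b)) :=
        isc_sum h _ _ (fun k _ => isc_pow h (isc_gam h a b) k)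
      have hc2 : γ ((g ^ (-(n:ℤ))) a) ((g ^ (-(n:ℤ))) b) = (g ^ ((n:ℤ) + (n:ℤ))) (γ a b) := by
        rw [cpow_left h, cpow_right h, gg]
        simp only [neg_neg]
      rw [show ((n+1 : ℕ) : ℤ) = (n : ℤ) + 1 by push_cast; ring,
        show (-((n:ℤ)+1)) = -(n:ℤ) - 1 by ring, gpow_pred_apply, ih,
        ginv_add_isc h _ hS, Dneg1 h, hc2, ← gpow_pred_apply, ← gpow_pred_apply,
        ginv_sum h _ (fun k => k) a b,
        sum_pow_shift_Ico (γ a b) _ _ (-1)]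
      simp only [← gpow_succ_apply]
      rw [show (1 - (n:ℤ) + -1) = -(n:ℤ) by ring,
        show (2 * (n:ℤ) + 1 + -1) = (n:ℤ) + (n:ℤ) by ring,
        show (1 - ((n:ℤ) + 1)) = -(n:ℤ) by ring,
        show (2 * ((n:ℤ) + 1) + 1) = (n:ℤ) + (n:ℤ) + 3 by ring,
        ← sum_Ico_union (fun k => (g ^ k) (γ a b))
          (show -(n:ℤ) ≤ (n:ℤ) + (n:ℤ) by omega)
          (show (n:ℤ) + (n:ℤ) ≤ (n:ℤ) + (n:ℤ) + 3 by omega),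
        Ico3 ((n:ℤ) + (n:ℤ)) (fun k => (g ^ k) (γ a b))]
      abel

lemma Dpos (h : IsConstructionPair g γ) (a b : X) (n : ℕ) :
    (g ^ (n : ℤ)) (a + b) = (g ^ (n : ℤ)) a + (g ^ (n : ℤ)) b
      + ∑ k ∈ Finset.Ico (1 - 2 * (n : ℤ)) ((n : ℤ) + 1), (g ^ k) (γ a b) := by
  induction n with
  | zero => simp
  | succ n ih =>
      have hS : IsC γ (∑ k ∈ Finset.Ico (1 - 2 * (n : ℤ)) ((n : ℤ) + 1), (g ^ k) (γ a b)) :=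
        isc_sum h _ _ (fun k _ => isc_pow h (isc_gam h a b) k)
      have hc2 : γ ((g ^ (n:ℤ)) a) ((g ^ (n:ℤ)) b) = (g ^ (-(n:ℤ) + -(n:ℤ))) (γ a b) := by
        rw [cpow_left h, cpow_right h, gg]
      rw [show ((n+1 : ℕ) : ℤ) = (n : ℤ) + 1 by push_cast; ring,
        gpow_succ_apply, ih, g_add_isc h _ hS, Dpos1 h, hc2]
      simp only [← gpow_succ_apply, ← gpow_pred_apply]
      rw [g_sum h _ (fun k => k) a b,
        sum_pow_shift_Ico (γ a b) _ _ 1]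
      rw [show (1 - 2 * (n:ℤ) + 1) = (-(n:ℤ) + -(n:ℤ) - 1) + 3 by ring,
        show ((n:ℤ) + 1 + 1) = (n:ℤ) + 2 by ring,
        show (1 - 2 * ((n:ℤ) + 1)) = -(n:ℤ) + -(n:ℤ) - 1 by ring,
        ← sum_Ico_union (fun k => (g ^ k) (γ a b))
          (show -(n:ℤ) + -(n:ℤ) - 1 ≤ (-(n:ℤ) + -(n:ℤ) - 1) + 3 by omega)
          (show (-(n:ℤ) + -(n:ℤ) - 1) + 3 ≤ (n:ℤ) + 2 by omega),
        Ico3 (-(n:ℤ) + -(n:ℤ) - 1) (fun k => (g ^ k) (γ a b)),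
        show (-(n:ℤ) + -(n:ℤ) - 1) + 1 = -(n:ℤ) + -(n:ℤ) by ring]
      abel

lemma Dall (h : IsConstructionPair g γ) (i : ℤ) (a b : X) :
    (g ^ i) (a + b) = (g ^ i) a + (g ^ i) b
      + ∑ k ∈ I (1 + i) (1 - 2 * i), (g ^ k) (γ a b) := by
  rcases le_total 0 i with hi | hi
  · obtain ⟨n, rfl⟩ : ∃ n : ℕ, i = (n : ℤ) := ⟨i.toNat, by omega⟩
    rw [I_comm, I_of_le (by omega), Dpos h a b n,
      show ((n:ℤ) + 1) = 1 + (n:ℤ) by ring]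
  · obtain ⟨n, rfl⟩ : ∃ n : ℕ, i = -(n : ℤ) := ⟨(-i).toNat, by omega⟩
    rw [I_of_le (by omega), Dneg h a b n,
      show (1 - (n:ℤ)) = 1 + -(n:ℤ) by ring,
      show (2 * (n:ℤ) + 1) = 1 - 2 * -(n:ℤ) by ring]

end CP

/-- The multiplication of `ℤ ⋉_{(g,γ)} X` on `ℤ × X`:
`(i,x)·(j,y) = (i+j, g^{-j}(x) + y + ∑_{k ∈ I(i+j,-j)} g^{-k}(γ(x,y)))`. -/
noncomputable def cmul {X : Type*} [AddCommGroup X] (g : Equiv.Perm X) (γ : X → X → X) :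
    ℤ × X → ℤ × X → ℤ × X :=
  fun u v =>
    (u.1 + v.1,
      (g ^ (-v.1)) u.2 + v.2 + ∑ k ∈ I (u.1 + v.1) (-v.1), (g ^ (-k)) (γ u.2 v.2))

namespace CP
variable {X : Type*} [AddCommGroup X] {g : Equiv.Perm X} {γ : X → X → X}

lemma id_left (h : IsConstructionPair g γ) (u : ℤ × X) :
    cmul g γ ((0 : ℤ), (0 : X)) u = u := by
  obtain ⟨j, y⟩ := u
  simp only [cmul, Prod.mk.injEq]
  refine ⟨by ring, ?_⟩
  rw [zpow_apply_zero h,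
    Finset.sum_eq_zero (fun k _ => by rw [gz h, zpow_apply_zero h] :
      ∀ k ∈ I (0 + j) (-j), (g ^ (-k)) (γ 0 y) = 0)]
  simp

lemma id_right (h : IsConstructionPair g γ) (u : ℤ × X) :
    cmul g γ u ((0 : ℤ), (0 : X)) = u := by
  obtain ⟨i, x⟩ := u
  simp only [cmul, Prod.mk.injEq]
  refine ⟨by ring, ?_⟩
  rw [Finset.sum_eq_zero (fun k _ => by rw [zg h, zpow_apply_zero h] :
      ∀ k ∈ I (i + 0) (-0), (g ^ (-k)) (γ x 0) = 0)]
  simp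

lemma mul_inv (h : IsConstructionPair g γ) (i : ℤ) (x : X) :
    cmul g γ (i, x) (-i, -((g ^ i) x)) = ((0 : ℤ), (0 : X)) := by
  simp only [cmul, Prod.mk.injEq]
  refine ⟨by ring, ?_⟩
  have e : γ x (-((g ^ i) x)) = 0 := by
    rw [gneg_right h, cpow_right h, h.alt, zpow_apply_zero h, neg_zero]
  rw [Finset.sum_eq_zero (fun k _ => by rw [e, zpow_apply_zero h] :
      ∀ k ∈ I (i + -i) (- -i), (g ^ (-k)) (γ x (-((g ^ i) x))) = 0), neg_neg]
  simp

lemma inv_mul (h : IsConstructionPair g γ) (i : ℤ) (x : X) :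
    cmul g γ (-i, -((g ^ i) x)) (i, x) = ((0 : ℤ), (0 : X)) := by
  simp only [cmul, Prod.mk.injEq]
  refine ⟨by ring, ?_⟩
  have e : γ (-((g ^ i) x)) x = 0 := by
    rw [gneg_left h, cpow_left h, h.alt, zpow_apply_zero h, neg_zero]
  rw [Finset.sum_eq_zero (fun k _ => by rw [e, zpow_apply_zero h] :
      ∀ k ∈ I (-i + i) (-i), (g ^ (-k)) (γ (-((g ^ i) x)) x) = 0),
    zpow_neg_apply h, gg, show -i + i = (0 : ℤ) by ring, zpow_zero]
  simp

lemma inv_cancel_left (h : IsConstructionPair g γ) (i j : ℤ) (x y : X) :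
    cmul g γ (-i, -((g ^ i) x)) (cmul g γ (i, x) (j, y)) = (j, y) := by
  simp only [cmul, Prod.mk.injEq]
  refine ⟨by ring, ?_⟩
  have hS : IsC γ (∑ k ∈ I (i + j) (-j), (g ^ (-k)) (γ x y)) :=
    isc_sum h _ _ (fun k _ => isc_pow h (isc_gam h x y) _)
  have e1 : γ ((g ^ i) x) ((g ^ (-j)) x) = 0 := by
    rw [cpow_right h, cpow_left h, h.alt, zpow_apply_zero h, zpow_apply_zero h]
  have h1 : γ (-((g ^ i) x)) ((g ^ (-j)) x + y + ∑ k ∈ I (i + j) (-j), (g ^ (-k)) (γ x y))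
      = (g ^ (-i)) (γ x y) := by
    rw [gneg_left h, h.add_right, h.add_right, e1, cpow_left h,
      gam_isc_right h hS, zero_add, add_zero, phi_neg h]
  have h2 : ∑ k ∈ I (-i + (i + j)) (-(i + j)), (g ^ (-k)) ((g ^ (-i)) (γ x y))
      = ∑ k ∈ I (1 - i - j) (1 + j), (g ^ k) (γ x y) := by
    rw [Finset.sum_congr rfl (fun k _ => by rw [gg, show -k + -i = -i - k by ring] :
        ∀ k ∈ I (-i + (i + j)) (-(i + j)),
          (g ^ (-k)) ((g ^ (-i)) (γ x y)) = (g ^ (-i - k)) (γ x y)),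
      sum_pow_reindex (γ x y) _ _ (-i),
      show (-i + 1 - (-i + (i + j))) = 1 - i - j by ring,
      show (-i + 1 - -(i + j)) = 1 + j by ring]
  have h3 : ∑ k ∈ I (i + j) (-j), (g ^ (-k)) (γ x y)
      = ∑ k ∈ I (1 - i - j) (1 + j), (g ^ k) (γ x y) := by
    rw [Finset.sum_congr rfl (fun k _ => by rw [show (0:ℤ) - k = -k by ring] :
        ∀ k ∈ I (i + j) (-j), (g ^ (-k)) (γ x y) = (g ^ ((0:ℤ) - k)) (γ x y)),
      sum_pow_reindex (γ x y) _ _ 0,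
      show ((0:ℤ) + 1 - (i + j)) = 1 - i - j by ring,
      show ((0:ℤ) + 1 - -j) = 1 + j by ring]
  have h4 : (g ^ (-(i + j))) (-((g ^ i) x)) = -((g ^ (-j)) x) := by
    rw [zpow_neg_apply h, gg, show -(i + j) + i = -j by ring]
  rw [h4, h1, h2, h3]
  have e : ∀ P Q R : X, -P + (P + Q + R) + R = Q + (R + R) := fun P Q R => by abel
  rw [e, sum_tt h (I (1 - i - j) (1 + j)) (fun k => k) x y, add_zero]

lemma inv_cancel_right (h : IsConstructionPair g γ) (i j : ℤ) (x y : X) :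
    cmul g γ (cmul g γ (j, y) (i, x)) (-i, -((g ^ i) x)) = (j, y) := by
  simp only [cmul, Prod.mk.injEq]
  refine ⟨by ring, ?_⟩
  have hT : IsC γ (∑ k ∈ I (j + i) (-i), (g ^ (-k)) (γ y x)) :=
    isc_sum h _ _ (fun k _ => isc_pow h (isc_gam h y x) _)
  have e1 : γ ((g ^ (-i)) y) (-((g ^ i) x)) = -(γ y x) := by
    rw [gneg_right h, cpow_left h, cpow_right h, gg, neg_neg,
      show i + -i = (0:ℤ) by ring, zpow_zero, Equiv.Perm.coe_one, id_eq]
  have e2 : γ x (-((g ^ i) x)) = 0 := by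
    rw [gneg_right h, cpow_right h, h.alt, zpow_apply_zero h, neg_zero]
  have e3 : γ (∑ k ∈ I (j + i) (-i), (g ^ (-k)) (γ y x)) (-((g ^ i) x)) = 0 := hT _
  have hB : γ ((g ^ (-i)) y + x + ∑ k ∈ I (j + i) (-i), (g ^ (-k)) (γ y x)) (-((g ^ i) x))
      = γ y x := by
    rw [h.add_left, h.add_left, e1, e2, e3, add_zero, add_zero, neg_gam h]
  rw [neg_neg, show j + i + -i = j by ring, hB,
    gpow_add_isc h i ((g ^ (-i)) y + x) hT, Dall h i ((g ^ (-i)) y) x,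
    gg, show i + -i = (0:ℤ) by ring, zpow_zero, cpow_left h, neg_neg]
  simp only [Equiv.Perm.coe_one, id_eq]
  have h8 : ∑ k ∈ I (1 + i) (1 - 2 * i), (g ^ k) ((g ^ i) (γ y x))
      = ∑ k ∈ I (1 + 2 * i) (1 - i), (g ^ k) (γ y x) := by
    rw [Finset.sum_congr rfl (fun k _ => by rw [gg] :
        ∀ k ∈ I (1 + i) (1 - 2 * i), (g ^ k) ((g ^ i) (γ y x)) = (g ^ (k + i)) (γ y x)),
      sum_pow_shift (γ y x) _ _ i,
      show (1 + i + i) = 1 + 2 * i by ring, show (1 - 2 * i + i) = 1 - i by ring]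
  have h9 : (g ^ i) (∑ k ∈ I (j + i) (-i), (g ^ (-k)) (γ y x))
      = ∑ k ∈ I (1 - j) (1 + 2 * i), (g ^ k) (γ y x) := by
    rw [gpow_sum h i _ (fun k => -k) y x,
      Finset.sum_congr rfl (fun k _ => by rw [show -k + i = i - k by ring] :
        ∀ k ∈ I (j + i) (-i), (g ^ (-k + i)) (γ y x) = (g ^ (i - k)) (γ y x)),
      sum_pow_reindex (γ y x) _ _ i,
      show (i + 1 - (j + i)) = 1 - j by ring, show (i + 1 - -i) = 1 + 2 * i by ring]
  have h10 : ∑ k ∈ I j i, (g ^ (-k)) (γ y x)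
      = ∑ k ∈ I (1 - j) (1 - i), (g ^ k) (γ y x) := by
    rw [Finset.sum_congr rfl (fun k _ => by rw [show (0:ℤ) - k = -k by ring] :
        ∀ k ∈ I j i, (g ^ (-k)) (γ y x) = (g ^ ((0:ℤ) - k)) (γ y x)),
      sum_pow_reindex (γ y x) _ _ 0,
      show ((0:ℤ) + 1 - j) = 1 - j by ring, show ((0:ℤ) + 1 - i) = 1 - i by ring]
  rw [h8, h9, h10, I_comm (1 + 2 * i) (1 - i)]
  have htri := tri (fun m => (g ^ m) (γ y x)) (fun m => phi_tt h m y x)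
    (1 - i) (1 - j) (1 + 2 * i)
  have e : ∀ P Q A B C : X, P + Q + A + B + -Q + C = P + (A + B + C) :=
    fun P Q A B C => by abel
  rw [e, htri, add_zero]

end CP

theorem stmt_8 {X : Type*} [AddCommGroup X] (g : Equiv.Perm X) (γ : X → X → X)
    (h : IsConstructionPair g γ) :
    (∀ u : ℤ × X, cmul g γ ((0 : ℤ), (0 : X)) u = u ∧ cmul g γ u ((0 : ℤ), (0 : X)) = u) ∧
    (∀ (i : ℤ) (x : X),
      cmul g γ (i, x) (-i, -((g ^ i) x)) = ((0 : ℤ), (0 : X)) ∧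
      cmul g γ (-i, -((g ^ i) x)) (i, x) = ((0 : ℤ), (0 : X))) ∧
    (∀ (i : ℤ) (x : X) (w : ℤ × X),
      cmul g γ (-i, -((g ^ i) x)) (cmul g γ (i, x) w) = w ∧
      cmul g γ (cmul g γ w (i, x)) (-i, -((g ^ i) x)) = w) := by
  refine ⟨fun u => ⟨CP.id_left h u, CP.id_right h u⟩,
    fun i x => ⟨CP.mul_inv h i x, CP.inv_mul h i x⟩,
    fun i x w => ?_⟩
  obtain ⟨j, y⟩ := w
  exact ⟨CP.inv_cancel_left h i j x y, CP.inv_cancel_right h i j x y⟩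
end

section
/- Let (g,γ) be a construction pair on an abelian group (X,+), and equip ℤ × X with the multiplication (i,x)·(j,y) = (i+j, g^{−j}(x)+y+∑_{k∈I(i+j,−j)} g^{−k}(γ(x,y))). For integers i,j and x,y ∈ X, set c = (0, −x+g^{−j}(x)+y−g^{−i}(y)+∑_{k∈I(−i,−j)} g^{−k}(γ(x,y)) + ∑_{k∈I(−i−j,i+j)} g^{−k}(γ(x,y))). Then ((j,y)·(i,x))·c = (i,x)·(j,y); that is, c is the loop commutator [(i,x),(j,y)]. -/
section CP
variable {X : Type*} [AddCommGroup X] {g : Equiv.Perm X} {γ : X → X → X}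
  (h : IsConstructionPair g γ)
set_option linter.unusedSectionVars false

lemma cp_zpow_zpow (a b : ℤ) (u : X) : (g ^ a) ((g ^ b) u) = (g ^ (a + b)) u := by
  rw [← Equiv.Perm.mul_apply, ← zpow_add]

include h

lemma cp_zero_left (y : X) : γ 0 y = 0 := by
  have := h.add_left 0 0 y
  rw [add_zero] at this
  exact (left_eq_add.mp this)

lemma cp_zero_right (x : X) : γ x 0 = 0 := by
  rw [h.symm]; exact cp_zero_left h x

lemma cp_two (x y : X) : γ x y + γ x y = 0 := by
  have := h.alt (x + y)
  rw [h.add_left, h.add_right, h.add_right, h.alt, h.alt, h.symm y x] at this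
  rw [zero_add, add_zero] at this
  exact this

lemma cp_neg_left (x y : X) : γ (-x) y = γ x y := by
  have h1 : γ (-x) y + γ x y = 0 := by
    rw [← h.add_left, neg_add_cancel, cp_zero_left h]
  have h2 := cp_two h x y
  have := h1.trans h2.symm
  exact add_right_cancel this

lemma cp_neg_right (x y : X) : γ x (-y) = γ x y := by
  rw [h.symm, cp_neg_left h, h.symm]

lemma cp_ginv_zero : g⁻¹ (0 : X) = 0 := by
  have := h.c3 0 0
  rwa [cp_zero_left h, cp_zero_right h] at this

lemma cp_g_zero : g (0 : X) = 0 := by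
  have := congrArg g (cp_ginv_zero h)
  rw [Equiv.Perm.apply_inv_self] at this
  exact this.symm

lemma cp_zpow_zero (n : ℤ) : (g ^ n) (0 : X) = 0 := by
  induction n using Int.induction_on with
  | zero => simp
  | succ n ih =>
      have : (g ^ ((n : ℤ) + 1)) (0 : X) = (g ^ (n : ℤ)) (g 0) := by
        rw [zpow_add_one, Equiv.Perm.mul_apply]
      rw [this, cp_g_zero h, ih]
  | pred n ih =>
      have : (g ^ (-(n : ℤ) - 1)) (0 : X) = (g ^ (-(n : ℤ))) (g⁻¹ 0) := by
        rw [zpow_sub_one, Equiv.Perm.mul_apply]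
      rw [this, cp_ginv_zero h, ih]

lemma cp_c3_inv (x y : X) : γ (g⁻¹ x) y = g (γ x y) := by
  have := h.c3 (g⁻¹ x) y
  rw [Equiv.Perm.apply_inv_self] at this
  have := congrArg g this.symm
  rw [Equiv.Perm.apply_inv_self] at this
  exact this.symm

lemma cp_c3' (n : ℤ) (x y : X) : γ ((g ^ n) x) y = (g ^ (-n)) (γ x y) := by
  induction n using Int.induction_on generalizing x with
  | zero => simp
  | succ n ih =>
      have e : (g ^ ((n : ℤ) + 1)) x = (g ^ (n : ℤ)) (g x) := by
        rw [zpow_add_one, Equiv.Perm.mul_apply]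
      rw [e, ih, ← h.c3]
      have : g⁻¹ (γ x y) = (g ^ (-1 : ℤ)) (γ x y) := by simp
      rw [this, cp_zpow_zpow, show (-(n : ℤ)) + -1 = -((n : ℤ) + 1) by ring]
  | pred n ih =>
      have e : (g ^ (-(n : ℤ) - 1)) x = (g ^ (-(n : ℤ))) (g⁻¹ x) := by
        rw [zpow_sub_one, Equiv.Perm.mul_apply]
      rw [e, ih, cp_c3_inv h]
      have : g (γ x y) = (g ^ (1 : ℤ)) (γ x y) := by simp
      rw [this, cp_zpow_zpow, show (- -(n : ℤ)) + 1 = -(-(n : ℤ) - 1) by ring]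

lemma cp_c3'' (n : ℤ) (x y : X) : γ x ((g ^ n) y) = (g ^ (-n)) (γ x y) := by
  rw [h.symm, cp_c3' h, h.symm]

/-- the "radical" predicate -/
def CPrad (γ : X → X → X) (u : X) : Prop := ∀ w, γ u w = 0

lemma cp_rad_gamma (x y : X) : CPrad γ (γ x y) := fun w => h.c2 x y w

lemma cp_rad_zero : CPrad γ (0 : X) := fun w => cp_zero_left h w

lemma cp_rad_add {u v : X} (hu : CPrad γ u) (hv : CPrad γ v) : CPrad γ (u + v) :=
  fun w => by rw [h.add_left, hu w, hv w, add_zero]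

lemma cp_rad_neg {u : X} (hu : CPrad γ u) : CPrad γ (-u) :=
  fun w => by rw [cp_neg_left h, hu w]

lemma cp_rad_zpow (n : ℤ) {u : X} (hu : CPrad γ u) : CPrad γ ((g ^ n) u) :=
  fun w => by rw [cp_c3' h, hu w, cp_zpow_zero h]

lemma cp_rad_sum {s : Finset ℤ} {f : ℤ → X} (hf : ∀ k ∈ s, CPrad γ (f k)) :
    CPrad γ (∑ k ∈ s, f k) := by
  induction s using Finset.cons_induction with
  | empty => simpa using cp_rad_zero h
  | cons a s ha ih =>
      rw [Finset.sum_cons]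
      exact cp_rad_add h (hf a (Finset.mem_cons_self a s))
        (ih fun k hk => hf k (Finset.mem_cons_of_mem hk))

lemma cp_g_add {u v : X} (huv : γ u v = 0) : g (u + v) = g u + g v := by
  have := h.c1 u v
  rw [huv, cp_ginv_zero h, cp_ginv_zero h] at this
  rw [add_zero, add_zero, add_zero] at this
  have := congrArg g this
  rw [Equiv.Perm.apply_inv_self] at this
  exact this.symm

lemma cp_ginv_add {u v : X} (huv : γ u v = 0) : g⁻¹ (u + v) = g⁻¹ u + g⁻¹ v := by
  have hab : γ (g⁻¹ u) (g⁻¹ v) = 0 := by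
    rw [cp_c3_inv h, h.symm, cp_c3_inv h, h.symm, huv, cp_g_zero h, cp_g_zero h]
  have := cp_g_add h hab
  rw [Equiv.Perm.apply_inv_self, Equiv.Perm.apply_inv_self] at this
  have := congrArg (⇑g⁻¹) this.symm
  rwa [Equiv.Perm.inv_apply_self] at this

lemma cp_zpow_add (n : ℤ) {u v : X} (hu : CPrad γ u) (hv : CPrad γ v) :
    (g ^ n) (u + v) = (g ^ n) u + (g ^ n) v := by
  induction n using Int.induction_on with
  | zero => simp
  | succ n ih =>
      have e : ∀ w : X, (g ^ ((n : ℤ) + 1)) w = g ((g ^ (n : ℤ)) w) := by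
        intro w
        rw [show (n : ℤ) + 1 = 1 + n by ring, zpow_add, Equiv.Perm.mul_apply, zpow_one]
      rw [e, e, e, ih, cp_g_add h ((cp_rad_zpow h n hu) _)]
  | pred n ih =>
      have e : ∀ w : X, (g ^ (-(n : ℤ) - 1)) w = g⁻¹ ((g ^ (-(n : ℤ))) w) := by
        intro w
        rw [show -(n : ℤ) - 1 = -1 + -(n : ℤ) by ring, zpow_add, Equiv.Perm.mul_apply]
        simp
      rw [e, e, e, ih, cp_ginv_add h ((cp_rad_zpow h (-n) hu) _)]

lemma cp_zpow_sum (n : ℤ) {s : Finset ℤ} {f : ℤ → X}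
    (hf : ∀ k ∈ s, CPrad γ (f k)) :
    (g ^ n) (∑ k ∈ s, f k) = ∑ k ∈ s, (g ^ n) (f k) := by
  induction s using Finset.cons_induction with
  | empty => simpa using cp_zpow_zero h n
  | cons a s ha ih =>
      rw [Finset.sum_cons, Finset.sum_cons,
        cp_zpow_add h n (hf a (Finset.mem_cons_self a s))
          (cp_rad_sum h fun k hk => hf k (Finset.mem_cons_of_mem hk)),
        ih fun k hk => hf k (Finset.mem_cons_of_mem hk)]

lemma cp_gamma_sum_left (w : X) {s : Finset ℤ} (f : ℤ → X) :
    γ (∑ k ∈ s, f k) w = ∑ k ∈ s, γ (f k) w := by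
  induction s using Finset.cons_induction with
  | empty => simpa using cp_zero_left h w
  | cons a s ha ih => rw [Finset.sum_cons, Finset.sum_cons, h.add_left, ih]

lemma cp_gamma_sum_right (w : X) {s : Finset ℤ} (f : ℤ → X) :
    γ w (∑ k ∈ s, f k) = ∑ k ∈ s, γ w (f k) := by
  rw [h.symm, cp_gamma_sum_left h]
  exact Finset.sum_congr rfl fun k _ => h.symm _ _

end CP

section Isum
variable {X : Type*} [AddCommGroup X] (f : ℤ → X)

lemma I_comm (a b : ℤ) : I a b = I b a := by
  unfold I; rw [min_comm, max_comm]

lemma sum_self_zero (hf : ∀ k, f k + f k = 0) (s : Finset ℤ) :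
    (∑ k ∈ s, f k) + (∑ k ∈ s, f k) = 0 := by
  rw [← Finset.sum_add_distrib]
  exact Finset.sum_eq_zero fun k _ => hf k

lemma sum_I_shift (a b d : ℤ) :
    ∑ k ∈ I (a - d) (b - d), f k = ∑ k ∈ I a b, f (k - d) := by
  unfold I
  rw [show min (a - d) (b - d) = min a b - d by omega,
    show max (a - d) (b - d) = max a b - d by omega,
    show min a b - d = min a b + (-d) by ring,
    show max a b - d = max a b + (-d) by ring,
    ← Finset.map_add_right_Ico, Finset.sum_map]
  exact Finset.sum_congr rfl fun k _ => by simp [addRightEmbedding, sub_eq_add_neg]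

lemma sum_Ico_cons {a b c : ℤ} (h1 : a ≤ b) (h2 : b ≤ c) :
    (∑ k ∈ Finset.Ico a b, f k) + (∑ k ∈ Finset.Ico b c, f k)
      = ∑ k ∈ Finset.Ico a c, f k := by
  rw [← Finset.sum_union (Finset.Ico_disjoint_Ico_consecutive a b c),
    Finset.Ico_union_Ico_eq_Ico h1 h2]

lemma sum_I_le {a b : ℤ} (hab : a ≤ b) : ∑ k ∈ I a b, f k = ∑ k ∈ Finset.Ico a b, f k := by
  unfold I; rw [min_eq_left hab, max_eq_right hab]

lemma sum_I_eq (hf : ∀ k, f k + f k = 0) (a b : ℤ) :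
    ∑ k ∈ I a b, f k = (∑ k ∈ I 0 a, f k) + (∑ k ∈ I 0 b, f k) := by
  have neg_sum : ∀ s : Finset ℤ, -(∑ k ∈ s, f k) = ∑ k ∈ s, f k := fun s =>
    neg_eq_of_add_eq_zero_right (sum_self_zero f hf s)
  have key : ∀ a b : ℤ, a ≤ b →
      ∑ k ∈ I a b, f k = (∑ k ∈ I 0 a, f k) + (∑ k ∈ I 0 b, f k) := by
    intro a b hab
    rcases le_or_gt 0 a with h0a | ha0
    · have h0b : (0:ℤ) ≤ b := le_trans h0a hab
      rw [sum_I_le f hab, sum_I_le f h0a, sum_I_le f h0b]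
      have H := sum_Ico_cons f h0a hab
      have : ∑ k ∈ Finset.Ico a b, f k
          = -(∑ k ∈ Finset.Ico 0 a, f k) + ∑ k ∈ Finset.Ico 0 b, f k := by
        rw [← H]; abel
      rw [this, neg_sum]
    · rcases le_or_gt b 0 with hb0 | h0b
      · have ha0' : a ≤ 0 := le_of_lt ha0
        rw [sum_I_le f hab,
          show I 0 a = Finset.Ico a 0 by unfold I; rw [min_comm, max_comm, min_eq_left ha0', max_eq_right ha0'],
          show I 0 b = Finset.Ico b 0 by unfold I; rw [min_comm, max_comm, min_eq_left hb0, max_eq_right hb0]]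
        have H := sum_Ico_cons f hab hb0
        have : ∑ k ∈ Finset.Ico a b, f k
            = ∑ k ∈ Finset.Ico a 0, f k + -(∑ k ∈ Finset.Ico b 0, f k) := by
          rw [← H]; abel
        rw [this, neg_sum]
      · have ha0' : a ≤ 0 := le_of_lt ha0
        have h0b' : (0:ℤ) ≤ b := le_of_lt h0b
        rw [sum_I_le f hab,
          show I 0 a = Finset.Ico a 0 by unfold I; rw [min_comm, max_comm, min_eq_left ha0', max_eq_right ha0'],
          sum_I_le f h0b']
        exact (sum_Ico_cons f ha0' h0b').symm
  rcases le_total a b with hab | hba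
  · exact key a b hab
  · rw [I_comm, key b a hba, add_comm]

end Isum

theorem stmt_10 {X : Type*} [AddCommGroup X] (g : Equiv.Perm X) (γ : X → X → X)
    (h : IsConstructionPair g γ) (i j : ℤ) (x y : X)
    (c : ℤ × X)
    (hc : c = ((0 : ℤ),
      -x + (g ^ (-j)) x + y - (g ^ (-i)) y
        + ∑ k ∈ I (-i) (-j), (g ^ (-k)) (γ x y)
        + ∑ k ∈ I (-(i + j)) (i + j), (g ^ (-k)) (γ x y))) :
    cmul g γ (cmul g γ (j, y) (i, x)) c = cmul g γ (i, x) (j, y) := by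
  subst hc
  simp only [cmul, neg_zero, add_zero, zpow_zero, Equiv.Perm.coe_one, id_eq]
  rw [show j + i = i + j from add_comm j i, h.symm y x]
  -- radical facts
  have hradk : ∀ k : ℤ, CPrad γ ((g ^ k) (γ x y)) :=
    fun k => cp_rad_zpow h k (cp_rad_gamma h x y)
  have hS1 : CPrad γ (∑ k ∈ I (i + j) (-i), (g ^ (-k)) (γ x y)) :=
    cp_rad_sum h fun k _ => hradk (-k)
  have hS2 : CPrad γ (∑ k ∈ I (-i) (-j), (g ^ (-k)) (γ x y)) :=
    cp_rad_sum h fun k _ => hradk (-k)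
  have hS3 : CPrad γ (∑ k ∈ I (-(i + j)) (i + j), (g ^ (-k)) (γ x y)) :=
    cp_rad_sum h fun k _ => hradk (-k)
  have hS1z : ∀ w, γ (∑ k ∈ I (i + j) (-i), (g ^ (-k)) (γ x y)) w = 0 := hS1
  have hS2z : ∀ w, γ w (∑ k ∈ I (-i) (-j), (g ^ (-k)) (γ x y)) = 0 :=
    fun w => (h.symm w _).trans (hS2 w)
  have hS3z : ∀ w, γ w (∑ k ∈ I (-(i + j)) (i + j), (g ^ (-k)) (γ x y)) = 0 :=
    fun w => (h.symm w _).trans (hS3 w)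
  have h2t : (g ^ i) (γ x y) + (g ^ i) (γ x y) = 0 := by
    rw [← cp_zpow_add h i (cp_rad_gamma h x y) (cp_rad_gamma h x y), cp_two h,
      cp_zpow_zero h]
  have hAZ : γ ((g ^ (-i)) y + x + ∑ k ∈ I (i + j) (-i), (g ^ (-k)) (γ x y))
      (-x + (g ^ (-j)) x + y - (g ^ (-i)) y
        + ∑ k ∈ I (-i) (-j), (g ^ (-k)) (γ x y)
        + ∑ k ∈ I (-(i + j)) (i + j), (g ^ (-k)) (γ x y))
      = γ x y + (g ^ (i + j)) (γ x y) := by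
    simp only [sub_eq_add_neg, h.add_left, h.add_right, hS1z, hS2z, hS3z,
      cp_neg_left h, cp_neg_right h, cp_c3' h, cp_c3'' h, cp_zpow_zpow,
      h.alt, cp_zpow_zero h, h.symm y x, neg_neg, add_zero, zero_add]
    have e : (g ^ i) (γ x y) + (g ^ (i + j)) (γ x y) + (γ x y + (g ^ i) (γ x y))
        = γ x y + (g ^ (i + j)) (γ x y) + ((g ^ i) (γ x y) + (g ^ i) (γ x y)) := by
      abel
    rw [e, h2t, add_zero]
  rw [hAZ]
  have hf : ∀ k : ℤ, (g ^ (-k)) (γ x y) + (g ^ (-k)) (γ x y) = 0 := fun k => by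
    rw [← cp_zpow_add h (-k) (cp_rad_gamma h x y) (cp_rad_gamma h x y), cp_two h,
      cp_zpow_zero h]
  have step1 : ∀ k : ℤ, (g ^ (-k)) (γ x y + (g ^ (i + j)) (γ x y))
      = (g ^ (-k)) (γ x y) + (g ^ (-(k - (i + j)))) (γ x y) := by
    intro k
    rw [cp_zpow_add h (-k) (cp_rad_gamma h x y) (hradk (i + j)), cp_zpow_zpow,
      show -k + (i + j) = -(k - (i + j)) by ring]
  rw [Finset.sum_congr rfl (fun k _ => step1 k), Finset.sum_add_distrib]
  have hshift := sum_I_shift (fun k => (g ^ (-k)) (γ x y)) (i + j) 0 (i + j)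
  simp only [sub_self, zero_sub] at hshift
  rw [← hshift]
  rw [sum_I_eq (fun k => (g ^ (-k)) (γ x y)) hf (i + j) (-i),
    sum_I_eq (fun k => (g ^ (-k)) (γ x y)) hf (-i) (-j),
    sum_I_eq (fun k => (g ^ (-k)) (γ x y)) hf (-(i + j)) (i + j),
    sum_I_eq (fun k => (g ^ (-k)) (γ x y)) hf (i + j) 0,
    sum_I_eq (fun k => (g ^ (-k)) (γ x y)) hf (i + j) (-j)]
  have hI00 : I 0 0 = (∅ : Finset ℤ) := by simp [I]
  rw [hI00, Finset.sum_empty, add_zero]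
  have hFA := sum_self_zero (fun k => (g ^ (-k)) (γ x y)) hf (I 0 (i + j))
  have hFB := sum_self_zero (fun k => (g ^ (-k)) (γ x y)) hf (I 0 (-i))
  have hFC := sum_self_zero (fun k => (g ^ (-k)) (γ x y)) hf (I 0 (-(i + j)))
  refine Prod.ext_iff.mpr ⟨rfl, ?_⟩
  set A := ∑ k ∈ I 0 (i + j), (g ^ (-k)) (γ x y) with hA
  set B := ∑ k ∈ I 0 (-i), (g ^ (-k)) (γ x y) with hB
  set CC := ∑ k ∈ I 0 (-(i + j)), (g ^ (-k)) (γ x y) with hCC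
  set D := ∑ k ∈ I 0 (-j), (g ^ (-k)) (γ x y) with hD
  set U := (g ^ (-i)) y with hU
  set V := (g ^ (-j)) x with hV
  have e : U + x + (A + B) + (-x + V + y - U + (B + D) + (CC + A)) + (A + CC)
      = V + y + (A + D) + (A + A + (B + B + (CC + CC))) := by abel
  rw [e, hFA, hFB, hFC]
  simp
end
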